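/- Two circles represented by normalised cycle vectors C = (k, l, n, m) and C̃ = (k̃, l̃, ñ, m̃) with ⟨C,C⟩ = ⟨C̃,C̃⟩ = 1 (where ⟨C,C̃⟩ = k·m̃ + m·k̃ − 2n·ñ − 2l·l̃ up to sign conventions) are externally tangent if and only if (l + l̃)² + (n + ñ)² − (m + m̃)(k + k̃) = 0. -/

import Mathlib

/-- Two circles represented by normalised cycle vectors
`(k, l, n, m)`, `(k̃, l̃, ñ, m̃)` with `l² + n² - mk = 1 = l̃² + ñ² - m̃k̃` (so each has
radius `1/k`, taking `k, k̃ > 0`) are externally tangent — the distance between the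
centres equals the sum of the radii — if and only if
`(l + l̃)² + (n + ñ)² - (m + m̃)(k + k̃) = 0`. -/
theorem normalised_cycles_externally_tangent_iff
    (k l n m k' l' n' m' : ℝ)
    (hk : 0 < k) (hk' : 0 < k')
    (hnorm : l ^ 2 + n ^ 2 - m * k = 1) (hnorm' : l' ^ 2 + n' ^ 2 - m' * k' = 1) :
    Real.sqrt ((l / k - l' / k') ^ 2 + (n / k - n' / k') ^ 2) = 1 / k + 1 / k' ↔
      (l + l') ^ 2 + (n + n') ^ 2 - (m + m') * (k + k') = 0 := by
  have hB : (0:ℝ) ≤ 1 / k + 1 / k' := by positivity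
  have h1 : Real.sqrt ((l / k - l' / k') ^ 2 + (n / k - n' / k') ^ 2) = 1 / k + 1 / k' ↔
      (l / k - l' / k') ^ 2 + (n / k - n' / k') ^ 2 = (1 / k + 1 / k') ^ 2 := by
    nth_rewrite 1 [show (1:ℝ) / k + 1 / k' = Real.sqrt ((1 / k + 1 / k') ^ 2) from
      (Real.sqrt_sq hB).symm]
    exact Real.sqrt_inj (by positivity) (by positivity)
  rw [h1]
  have hkk : k * k' ≠ 0 := by positivity
  have key : (l / k - l' / k') ^ 2 + (n / k - n' / k') ^ 2 - (1 / k + 1 / k') ^ 2 =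
      -((l + l') ^ 2 + (n + n') ^ 2 - (m + m') * (k + k')) / (k * k') := by
    field_simp
    linear_combination (k' ^ 2 + k * k') * hnorm + (k ^ 2 + k * k') * hnorm'
  constructor
  · intro h
    have : -((l + l') ^ 2 + (n + n') ^ 2 - (m + m') * (k + k')) / (k * k') = 0 := by
      rw [← key]; linarith
    have := (div_eq_zero_iff.mp this).resolve_right hkk
    linarith
  · intro h
    have : (l / k - l' / k') ^ 2 + (n / k - n' / k') ^ 2 - (1 / k + 1 / k') ^ 2 = 0 := by
      rw [key, h]; simp
    linarith
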